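/- arXiv:1201.1212 — 7 statements merged into one kernel-verified Lean document; each statement's English description precedes it below -/
import Mathlib

section
/- Let ρ = (1/2)(I + x₁σ_x + x₂σ_y + x₃σ_z) and ρ' = (1/2)(I + x'₁σ_x + x'₂σ_y + x'₃σ_z) be qubit density matrices given by Bloch vectors x, x' ∈ ℝ³ with |x| ≤ 1 and |x'| ≤ 1. If |x|² + |x'|² ≤ 1 + (x·x')², then the anticommutator {ρ,ρ'} = ρρ' + ρ'ρ is positive semidefinite. -/
open Matrix ComplexOrder

/-- The Pauli matrix `σ_x`. -/
noncomputable def pauliX : Matrix (Fin 2) (Fin 2) ℂ := !![0, 1; 1, 0]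

/-- The Pauli matrix `σ_y`. -/
noncomputable def pauliY : Matrix (Fin 2) (Fin 2) ℂ := !![0, -Complex.I; Complex.I, 0]

/-- The Pauli matrix `σ_z`. -/
noncomputable def pauliZ : Matrix (Fin 2) (Fin 2) ℂ := !![1, 0; 0, -1]

/-- The qubit state with Bloch vector `x`:
`ρ = (1/2)(I + x₁ σ_x + x₂ σ_y + x₃ σ_z)`. -/
noncomputable def blochState (x : Fin 3 → ℝ) : Matrix (Fin 2) (Fin 2) ℂ :=
  (1 / 2 : ℂ) • (1 + (x 0 : ℂ) • pauliX + (x 1 : ℂ) • pauliY + (x 2 : ℂ) • pauliZ)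

lemma psd_real_aux (d1 d2 A B P Q zr zi : ℝ) (h1 : 0 ≤ d1) (h2 : 0 ≤ d2)
    (hA : 0 ≤ A) (hB : 0 ≤ B) (hz : zr^2 + zi^2 ≤ d1 * d2)
    (hPQ : P^2 + Q^2 = A * B) :
    0 ≤ d1 * A + d2 * B + 2 * (zr * P + zi * Q) := by
  have hS : 0 ≤ d1 * A + d2 * B := by positivity
  have key : 4 * (zr * P + zi * Q)^2 ≤ (d1 * A + d2 * B)^2 := by
    have h3 : (zr * P + zi * Q)^2 + (zr * Q - zi * P)^2 = (zr^2+zi^2) * (P^2+Q^2) := by ring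
    nlinarith [sq_nonneg (zr * Q - zi * P), sq_nonneg (d1 * A - d2 * B),
      mul_nonneg hA hB, mul_le_mul hz (le_refl (P^2+Q^2)) (by positivity) (by nlinarith)]
  nlinarith [key, hS, sq_nonneg (d1 * A + d2 * B + 2 * (zr * P + zi * Q))]

lemma psd_two (d1 d2 : ℝ) (z : ℂ) (h1 : 0 ≤ d1) (h2 : 0 ≤ d2)
    (hz : Complex.normSq z ≤ d1 * d2) :
    (!![(d1 : ℂ), (starRingEnd ℂ) z; z, (d2 : ℂ)]).PosSemidef := by
  rw [Matrix.posSemidef_iff_dotProduct_mulVec]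
  constructor
  · ext i j
    fin_cases i <;> fin_cases j <;>
      simp [Matrix.conjTranspose_apply, Complex.ext_iff]
  · intro v
    rw [dotProduct, Fin.sum_univ_two]
    have hmv0 : (!![(d1 : ℂ), (starRingEnd ℂ) z; z, (d2 : ℂ)] *ᵥ v) 0
        = d1 * v 0 + (starRingEnd ℂ) z * v 1 := by
      simp [Matrix.mulVec, dotProduct, Fin.sum_univ_two]
    have hmv1 : (!![(d1 : ℂ), (starRingEnd ℂ) z; z, (d2 : ℂ)] *ᵥ v) 1
        = z * v 0 + d2 * v 1 := by
      simp [Matrix.mulVec, dotProduct, Fin.sum_univ_two]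
    rw [hmv0, hmv1, Complex.le_def]
    have hnsq : z.re^2 + z.im^2 ≤ d1 * d2 := by
      have := hz; rw [Complex.normSq_apply] at this; nlinarith
    constructor
    · simp only [Complex.add_re, Complex.add_im, Complex.mul_re, Complex.mul_im,
        Pi.star_apply, Complex.star_def, Complex.conj_re, Complex.conj_im,
        Complex.ofReal_re, Complex.ofReal_im, Complex.zero_re, Complex.zero_im]
      have := psd_real_aux d1 d2 ((v 0).re^2 + (v 0).im^2) ((v 1).re^2 + (v 1).im^2)
        ((v 0).re * (v 1).re + (v 0).im * (v 1).im)
        ((v 0).re * (v 1).im - (v 0).im * (v 1).re) z.re z.im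
        h1 h2 (by positivity) (by positivity) hnsq (by ring)
      nlinarith [this]
    · simp only [Complex.add_re, Complex.add_im, Complex.mul_re, Complex.mul_im,
        Pi.star_apply, Complex.star_def, Complex.conj_re, Complex.conj_im,
        Complex.ofReal_re, Complex.ofReal_im, Complex.zero_re, Complex.zero_im]
      ring

lemma bloch_explicit (x : Fin 3 → ℝ) :
    blochState x = !![((1 + x 2) / 2 : ℂ), (x 0 - x 1 * Complex.I) / 2;
      (x 0 + x 1 * Complex.I) / 2, (1 - x 2) / 2] := by
  ext i j
  fin_cases i <;> fin_cases j <;>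
    simp [blochState, pauliX, pauliY, pauliZ, Matrix.one_apply] <;> ring

set_option maxHeartbeats 1200000 in
lemma anticomm_explicit (x x' : Fin 3 → ℝ) :
    blochState x * blochState x' + blochState x' * blochState x =
    !![((((1 + (x 0 * x' 0 + x 1 * x' 1 + x 2 * x' 2) + (x 2 + x' 2)) / 2 : ℝ)) : ℂ),
       (((x 0 + x' 0 : ℝ) : ℂ) / 2 - ((x 1 + x' 1 : ℝ) : ℂ) / 2 * Complex.I);
       (((x 0 + x' 0 : ℝ) : ℂ) / 2 + ((x 1 + x' 1 : ℝ) : ℂ) / 2 * Complex.I),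
       ((((1 + (x 0 * x' 0 + x 1 * x' 1 + x 2 * x' 2) - (x 2 + x' 2)) / 2 : ℝ)) : ℂ)] := by
  rw [bloch_explicit x, bloch_explicit x']
  ext i j
  fin_cases i <;> fin_cases j <;>
    · simp only [Matrix.add_apply, Matrix.mul_apply, Fin.sum_univ_two,
        Matrix.cons_val', Matrix.cons_val_zero, Matrix.cons_val_one, Matrix.head_cons,
        Matrix.head_fin_const, Matrix.empty_val', Matrix.cons_val_fin_one]
      push_cast
      rw [Complex.ext_iff]
      simp [Complex.add_re, Complex.add_im, Complex.mul_re, Complex.mul_im,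
        Complex.div_ofNat_re, Complex.div_ofNat_im, Complex.sub_re, Complex.sub_im]
      constructor <;> ring

set_option maxHeartbeats 1600000 in
/-- For qubit density matrices `ρ`, `ρ'` with Bloch vectors `x`, `x'`
(`|x| ≤ 1`, `|x'| ≤ 1`), if `|x|² + |x'|² ≤ 1 + (x·x')²`, then the anticommutator
`{ρ, ρ'} = ρρ' + ρ'ρ` is positive semidefinite. -/
theorem qubit_anticommutator_posSemidef (x x' : Fin 3 → ℝ)
    (hx : ∑ i, x i ^ 2 ≤ 1) (hx' : ∑ i, x' i ^ 2 ≤ 1)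
    (h : (∑ i, x i ^ 2) + (∑ i, x' i ^ 2) ≤ 1 + (∑ i, x i * x' i) ^ 2) :
    (blochState x * blochState x' + blochState x' * blochState x).PosSemidef := by
  simp only [Fin.sum_univ_three] at hx hx' h
  rw [anticomm_explicit]
  set T := x 0 * x' 0 + x 1 * x' 1 + x 2 * x' 2 with hT
  have hcs : T ^ 2 ≤ (x 0 ^ 2 + x 1 ^ 2 + x 2 ^ 2) * (x' 0 ^ 2 + x' 1 ^ 2 + x' 2 ^ 2) := by
    rw [hT]
    nlinarith [sq_nonneg (x 0 * x' 1 - x 1 * x' 0), sq_nonneg (x 0 * x' 2 - x 2 * x' 0),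
      sq_nonneg (x 1 * x' 2 - x 2 * x' 1)]
  have hx0 : 0 ≤ x 0 ^ 2 + x 1 ^ 2 + x 2 ^ 2 := by positivity
  have hx'0 : 0 ≤ x' 0 ^ 2 + x' 1 ^ 2 + x' 2 ^ 2 := by positivity
  have ht1 : T ^ 2 ≤ 1 := by nlinarith [hcs, hx, hx', hx0, hx'0]
  have htpos : 0 ≤ 1 + T := by nlinarith [ht1, sq_nonneg (1 + T)]
  have hlen : (x 0 + x' 0) ^ 2 + (x 1 + x' 1) ^ 2 + (x 2 + x' 2) ^ 2 ≤ (1 + T) ^ 2 := by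
    nlinarith [h]
  have ha3 : (x 2 + x' 2) ^ 2 ≤ (1 + T) ^ 2 := by
    nlinarith [hlen, sq_nonneg (x 0 + x' 0), sq_nonneg (x 1 + x' 1)]
  have h1 : 0 ≤ (1 + T + (x 2 + x' 2)) / 2 := by nlinarith [ha3, htpos]
  have h2 : 0 ≤ (1 + T - (x 2 + x' 2)) / 2 := by nlinarith [ha3, htpos]
  have hzconj : (((x 0 + x' 0 : ℝ) : ℂ) / 2 - ((x 1 + x' 1 : ℝ) : ℂ) / 2 * Complex.I)
      = (starRingEnd ℂ) (((x 0 + x' 0 : ℝ) : ℂ) / 2 + ((x 1 + x' 1 : ℝ) : ℂ) / 2 * Complex.I) := by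
    rw [Complex.ext_iff]
    simp [Complex.add_re, Complex.add_im, Complex.sub_re, Complex.sub_im,
      Complex.mul_re, Complex.mul_im, Complex.div_ofNat_re, Complex.div_ofNat_im, map_ofNat]
  rw [hzconj]
  apply psd_two _ _ _ h1 h2
  have hre : (((x 0 + x' 0 : ℝ) : ℂ) / 2 + ((x 1 + x' 1 : ℝ) : ℂ) / 2 * Complex.I).re
      = (x 0 + x' 0) / 2 := by simp
  have him : (((x 0 + x' 0 : ℝ) : ℂ) / 2 + ((x 1 + x' 1 : ℝ) : ℂ) / 2 * Complex.I).im
      = (x 1 + x' 1) / 2 := by simp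
  rw [Complex.normSq_apply, hre, him]
  nlinarith [hlen]
end

section
/- (Theorem 1) Let ρ₁ = |ψ⟩⟨ψ| be a pure state on ℂ^d (ψ a unit vector) and let ρ₂ be any density matrix on ℂ^d. Then the anticommutator {ρ₁,ρ₂} = ρ₁ρ₂ + ρ₂ρ₁ is positive semidefinite if and only if ρ₁ and ρ₂ commute, i.e., ρ₁ρ₂ = ρ₂ρ₁. -/
open Matrix ComplexOrder

/-- The pure state (rank-one orthogonal projection) `|ψ⟩⟨ψ|` associated with a vector
`ψ : Fin d → ℂ`; its `(i, j)` entry is `ψ i * conj (ψ j)`. -/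
noncomputable def pureState {d : ℕ} (ψ : Fin d → ℂ) : Matrix (Fin d) (Fin d) ℂ :=
  vecMulVec ψ (star ψ)

section aux
variable {d : ℕ}

lemma aux_mul_vecMulVec (A : Matrix (Fin d) (Fin d) ℂ) (u v : Fin d → ℂ) :
    A * vecMulVec u v = vecMulVec (A *ᵥ u) v := by
  ext i j
  simp only [mul_apply, vecMulVec_apply, mulVec, dotProduct, Finset.sum_mul]
  exact Finset.sum_congr rfl fun k _ => by ring

lemma aux_vecMulVec_mul (A : Matrix (Fin d) (Fin d) ℂ) (u v : Fin d → ℂ) :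
    vecMulVec u v * A = vecMulVec u (v ᵥ* A) := by
  ext i j
  simp only [mul_apply, vecMulVec_apply, vecMul, dotProduct, Finset.mul_sum]
  exact Finset.sum_congr rfl fun k _ => by ring

lemma aux_vecMulVec_mulVec (u v x : Fin d → ℂ) :
    vecMulVec u v *ᵥ x = (v ⬝ᵥ x) • u := by
  ext i
  simp only [mulVec, vecMulVec_apply, dotProduct, Pi.smul_apply, smul_eq_mul,
    Finset.sum_mul, Finset.mul_sum]
  exact Finset.sum_congr rfl fun k _ => by ring

end aux

/-- Theorem 1: For a pure state `ρ₁ = |ψ⟩⟨ψ|` (`ψ` a unit vector) and any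
density matrix `ρ₂`, the anticommutator `ρ₁ρ₂ + ρ₂ρ₁` is positive semidefinite if and
only if `ρ₁` and `ρ₂` commute. -/
theorem pure_state_anticommutator_posSemidef_iff_commute {d : ℕ} (ψ : Fin d → ℂ)
    (hψ : star ψ ⬝ᵥ ψ = 1)
    (ρ₂ : Matrix (Fin d) (Fin d) ℂ) (hρ₂ : ρ₂.PosSemidef) (hρ₂tr : ρ₂.trace = 1) :
    (pureState ψ * ρ₂ + ρ₂ * pureState ψ).PosSemidef ↔
      pureState ψ * ρ₂ = ρ₂ * pureState ψ := by
  set A := ρ₂ with hAdef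
  set P := pureState ψ with hPdef
  have hAH : Aᴴ = A := hρ₂.1
  have hPH : Pᴴ = P := by
    ext i j
    simp [hPdef, pureState, conjTranspose_apply, vecMulVec_apply, mul_comm]
  have hPP : P * P = P := by
    rw [hPdef, pureState, aux_mul_vecMulVec, aux_vecMulVec_mulVec, hψ, one_smul]
  constructor
  · intro hS
    -- the analytic direction
    set α : ℂ := star ψ ⬝ᵥ (A *ᵥ ψ) with hαdef
    have hα : 0 ≤ α := hρ₂.dotProduct_mulVec_nonneg ψ
    have hαre : 0 ≤ α.re := (Complex.nonneg_iff.mp hα).1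
    have hαim : α.im = 0 := ((Complex.nonneg_iff.mp hα).2).symm
    have hαstar : star α = α := by
      rw [Complex.star_def, Complex.conj_eq_iff_im]; exact hαim
    set y : Fin d → ℂ := A *ᵥ ψ - α • ψ with hydef
    have hAψ : A *ᵥ ψ = y + α • ψ := by simp [hydef]
    have h1 : star ψ ⬝ᵥ y = 0 := by
      simp [hydef, dotProduct_sub, dotProduct_smul, ← hαdef, hψ, smul_eq_mul]
    have h2 : star y ⬝ᵥ ψ = 0 := by
      have h := congrArg star h1
      rw [star_zero] at h
      rw [← h]
      simp [dotProduct, star_sum, star_mul', mul_comm]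
    -- star ψ ᵥ* A = star (A *ᵥ ψ)
    have hrow : star ψ ᵥ* A = star (A *ᵥ ψ) := by
      rw [star_mulVec, hAH]
    set N : ℂ := star y ⬝ᵥ y with hNdef
    have hN : 0 ≤ N := dotProduct_star_self_nonneg y
    have hNre : 0 ≤ N.re := (Complex.nonneg_iff.mp hN).1
    have hNim : N.im = 0 := ((Complex.nonneg_iff.mp hN).2).symm
    -- star y ⬝ᵥ A *ᵥ ψ = N
    have key1 : star y ⬝ᵥ (A *ᵥ ψ) = N := by
      rw [hAψ, dotProduct_add, dotProduct_smul, h2, smul_zero, add_zero, hNdef]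
    -- star ψ ⬝ᵥ A *ᵥ y = N
    have key2 : star ψ ⬝ᵥ (A *ᵥ y) = N := by
      rw [dotProduct_mulVec, hrow, hAψ]
      have : star (y + α • ψ) ⬝ᵥ y = N := by
        simp [star_add, add_dotProduct, star_smul, smul_dotProduct, h1, hNdef]
      exact this
    -- main estimate: for every t > 0, N.re ≤ t * α.re
    have main : ∀ t : ℝ, 0 < t → N.re ≤ t * α.re := by
      intro t ht
      set x : Fin d → ℂ := y - (t : ℂ) • ψ with hxdef
      have hq := hS.dotProduct_mulVec_nonneg x
      have hPx : P *ᵥ x = (star ψ ⬝ᵥ x) • ψ := by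
        rw [hPdef, pureState, aux_vecMulVec_mulVec]
      have hψx : star ψ ⬝ᵥ x = -(t : ℂ) := by
        simp [hxdef, dotProduct_sub, dotProduct_smul, h1, hψ, smul_eq_mul]
      have hxψ : star x ⬝ᵥ ψ = -(t : ℂ) := by
        simp [hxdef, star_sub, sub_dotProduct, star_smul, smul_dotProduct, h2, hψ,
          smul_eq_mul, Complex.star_def, Complex.conj_ofReal]
      have hxAψ : star x ⬝ᵥ (A *ᵥ ψ) = N - t * α := by
        simp [hxdef, star_sub, sub_dotProduct, star_smul, smul_dotProduct, key1,
          ← hαdef, smul_eq_mul, Complex.star_def, Complex.conj_ofReal]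
      have hψAx : star ψ ⬝ᵥ (A *ᵥ x) = N - t * α := by
        have : A *ᵥ x = A *ᵥ y - (t : ℂ) • (A *ᵥ ψ) := by
          simp [hxdef, mulVec_sub, mulVec_smul]
        rw [this]
        simp [dotProduct_sub, dotProduct_smul, key2, ← hαdef, smul_eq_mul]
      have hval : star x ⬝ᵥ ((P * A + A * P) *ᵥ x) = -2 * t * (N - t * α) := by
        rw [add_mulVec, ← mulVec_mulVec, ← mulVec_mulVec, hPx, mulVec_smul,
          hPdef, pureState, aux_vecMulVec_mulVec]
        rw [dotProduct_add, dotProduct_smul, dotProduct_smul, hψAx, hxψ, hψx, hxAψ]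
        simp [smul_eq_mul]; ring
      rw [hval] at hq
      have hre := (Complex.nonneg_iff.mp hq).1
      have : (-2 * (t : ℂ) * (N - t * α)).re = -2 * t * (N.re - t * α.re) := by
        simp [Complex.mul_re, Complex.sub_re, Complex.sub_im, hNim, hαim]
      rw [this] at hre
      nlinarith
    -- conclude N = 0
    have hNre0 : N.re ≤ 0 := by
      by_contra h
      push_neg at h
      have h1' := main (N.re / (α.re + 1)) (by positivity)
      have : N.re / (α.re + 1) * α.re < N.re := by
        rw [div_mul_eq_mul_div, div_lt_iff₀ (by linarith)]
        nlinarith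
      linarith
    have hN0 : N = 0 := by
      apply Complex.ext <;> simp [hNim, le_antisymm hNre0 hNre]
    have hy0 : y = 0 := dotProduct_star_self_eq_zero.mp (by rw [← hNdef]; exact hN0)
    have hAψ' : A *ᵥ ψ = α • ψ := by rw [hAψ, hy0, zero_add]
    -- now P * A = A * P
    rw [hPdef, pureState, aux_vecMulVec_mul, aux_mul_vecMulVec, hrow, hAψ']
    ext i j
    simp only [vecMulVec_apply, star_smul, Pi.smul_apply, smul_eq_mul, hαstar]
    ring
  · intro hc
    have hPA : (P * A).PosSemidef := by
      have : P * A = Pᴴ * A * P := by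
        rw [hPH]
        calc P * A = (P * P) * A := by rw [hPP]
        _ = P * (A * P) := by rw [mul_assoc, hc]
        _ = P * A * P := by rw [← mul_assoc]
      rw [this]
      exact hρ₂.conjTranspose_mul_mul_same P
    have hAP : (A * P).PosSemidef := by rw [← hc]; exact hPA
    exact hPA.add hAP
end

section
/- (Theorem 3, asymptotic form) Let ψ₁, ψ₂ be unit vectors in ℂ^d with f = ⟨ψ₁, ψ₂⟩ satisfying 0 < |f| < 1, and let η₁, η₂ be density matrices on ℂ^d with η₁ψ₁ = 0 and η₂ψ₂ = 0. Set g₁ = ⟨ψ₂, η₁ψ₂⟩ and g₂ = ⟨ψ₁, η₂ψ₁⟩. Then there exists ε₀ > 0 (depending on ψ₁, ψ₂, η₁, η₂) such that for all ε₁, ε₂ with 0 < ε₁, ε₂ < ε₀ and ε₁g₁ + ε₂g₂ < (1 − |f|²)/2, the states ρᵢ = (1 − εᵢ)|ψᵢ⟩⟨ψᵢ| + εᵢηᵢ (i = 1,2) have an anticommutator {ρ₁,ρ₂} = ρ₁ρ₂ + ρ₂ρ₁ that is NOT positive semidefinite. -/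
open Matrix ComplexOrder

/-- The mixed state `ρ = (1 − ε)|ψ⟩⟨ψ| + ε η`. -/
noncomputable def mixState {d : ℕ} (ψ : Fin d → ℂ) (η : Matrix (Fin d) (Fin d) ℂ)
    (ε : ℝ) : Matrix (Fin d) (Fin d) ℂ :=
  (1 - (ε : ℂ)) • pureState ψ + (ε : ℂ) • η

lemma vecMulVec_mulVec' {d : ℕ} (a b v : Fin d → ℂ) :
    vecMulVec a b *ᵥ v = (b ⬝ᵥ v) • a := by
  ext i
  simp [vecMulVec_apply, mulVec, dotProduct, Finset.mul_sum, mul_assoc, mul_comm, mul_left_comm]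

lemma star_dotProduct' {d : ℕ} (a b : Fin d → ℂ) :
    star (star a ⬝ᵥ b) = star b ⬝ᵥ a := by
  simp [dotProduct, Finset.sum_comm, star_sum, mul_comm]

/-- Theorem 3, asymptotic form: Let `ψ₁, ψ₂` be unit vectors with
`f = ⟨ψ₁, ψ₂⟩`, `0 < |f| < 1`, and let `η₁, η₂` be density matrices with `η₁ψ₁ = 0`,
`η₂ψ₂ = 0`; set `g₁ = ⟨ψ₂, η₁ψ₂⟩`, `g₂ = ⟨ψ₁, η₂ψ₁⟩`.  Then there is `ε₀ > 0` such
that for all `0 < ε₁, ε₂ < ε₀` with `ε₁g₁ + ε₂g₂ < (1 − |f|²)/2`, the anticommutator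
of `ρᵢ = (1 − εᵢ)|ψᵢ⟩⟨ψᵢ| + εᵢηᵢ` is not positive semidefinite. -/
theorem anticommutator_not_posSemidef_near_pure {d : ℕ} (ψ₁ ψ₂ : Fin d → ℂ)
    (hψ₁ : star ψ₁ ⬝ᵥ ψ₁ = 1) (hψ₂ : star ψ₂ ⬝ᵥ ψ₂ = 1)
    (hf0 : 0 < ‖star ψ₁ ⬝ᵥ ψ₂‖) (hf1 : ‖star ψ₁ ⬝ᵥ ψ₂‖ < 1)
    (η₁ η₂ : Matrix (Fin d) (Fin d) ℂ)
    (hη₁ : η₁.PosSemidef) (hη₁tr : η₁.trace = 1) (hη₁ψ : η₁ *ᵥ ψ₁ = 0)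
    (hη₂ : η₂.PosSemidef) (hη₂tr : η₂.trace = 1) (hη₂ψ : η₂ *ᵥ ψ₂ = 0) :
    ∃ ε₀ > (0 : ℝ), ∀ ε₁ ε₂ : ℝ, 0 < ε₁ → ε₁ < ε₀ → 0 < ε₂ → ε₂ < ε₀ →
      ε₁ * (star ψ₂ ⬝ᵥ η₁ *ᵥ ψ₂).re + ε₂ * (star ψ₁ ⬝ᵥ η₂ *ᵥ ψ₁).re
          < (1 - ‖star ψ₁ ⬝ᵥ ψ₂‖ ^ 2) / 2 →
      ¬ (mixState ψ₁ η₁ ε₁ * mixState ψ₂ η₂ ε₂ +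
          mixState ψ₂ η₂ ε₂ * mixState ψ₁ η₁ ε₁).PosSemidef := by
  set f : ℂ := star ψ₁ ⬝ᵥ ψ₂ with hfdef
  set r : ℝ := ‖f‖ with hrdef
  set v : Fin d → ℂ := ψ₁ - ((starRingEnd ℂ f) / r) • ψ₂ with hvdef
  have hr : (r:ℂ) ≠ 0 := by exact_mod_cast hf0.ne'
  have hfc : star ψ₂ ⬝ᵥ ψ₁ = starRingEnd ℂ f := by
    rw [← star_dotProduct']; rfl
  have hff : (starRingEnd ℂ f) * f = (r:ℂ)^2 := by
    rw [mul_comm, Complex.mul_conj']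
  have h1 : star ψ₂ ⬝ᵥ v = starRingEnd ℂ f * (r - 1) / r := by
    simp [hvdef, dotProduct_sub, dotProduct_smul, hψ₂, hfc, smul_eq_mul]
    field_simp
  have h2 : star ψ₁ ⬝ᵥ v = 1 - r := by
    simp [hvdef, dotProduct_sub, dotProduct_smul, hψ₁, smul_eq_mul, div_mul_eq_mul_div, hff]
    field_simp
    have := hff
    simp only [hfdef] at this ⊢
    linear_combination this
  have h1' : star v ⬝ᵥ ψ₂ = f * (r - 1) / r := by
    rw [← star_dotProduct', h1]
    simp [map_div₀, Complex.conj_ofReal]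
  have h2' : star v ⬝ᵥ ψ₁ = 1 - r := by
    rw [← star_dotProduct', h2]
    simp [Complex.conj_ofReal]
  -- the quadratic form at ε = 0
  have hQ0 : (star v ⬝ᵥ ((pureState ψ₁ * pureState ψ₂ + pureState ψ₂ * pureState ψ₁) *ᵥ v)).re
      = -2 * r * (1 - r)^2 := by
    have e : star v ⬝ᵥ ((pureState ψ₁ * pureState ψ₂ + pureState ψ₂ * pureState ψ₁) *ᵥ v)
        = ((-2 : ℝ) * r * (1 - r)^2 : ℝ) := by
      rw [add_mulVec, dotProduct_add]
      rw [show (pureState ψ₁ * pureState ψ₂) *ᵥ v = pureState ψ₁ *ᵥ (pureState ψ₂ *ᵥ v) from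
        (mulVec_mulVec _ _ _).symm]
      rw [show (pureState ψ₂ * pureState ψ₁) *ᵥ v = pureState ψ₂ *ᵥ (pureState ψ₁ *ᵥ v) from
        (mulVec_mulVec _ _ _).symm]
      simp only [pureState, vecMulVec_mulVec', mulVec_smul, dotProduct_smul, smul_smul,
        smul_eq_mul]
      rw [h1, h2, h1', h2', hfc, ← hfdef]
      field_simp
      ring_nf
      push_cast
      linear_combination (4*(r:ℂ) - 2*(r:ℂ)^2 - 2) * hff
    rw [e, Complex.ofReal_re]
  -- continuity of the quadratic form in (ε₁, ε₂)
  set F : ℝ × ℝ → ℝ := fun p =>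
    (star v ⬝ᵥ ((mixState ψ₁ η₁ p.1 * mixState ψ₂ η₂ p.2 +
      mixState ψ₂ η₂ p.2 * mixState ψ₁ η₁ p.1) *ᵥ v)).re with hFdef
  have hmix1 : Continuous fun p : ℝ × ℝ => mixState ψ₁ η₁ p.1 := by
    unfold mixState
    apply Continuous.add
    · exact ((continuous_const.sub (Complex.continuous_ofReal.comp continuous_fst))).smul
        continuous_const
    · exact (Complex.continuous_ofReal.comp continuous_fst).smul continuous_const
  have hmix2 : Continuous fun p : ℝ × ℝ => mixState ψ₂ η₂ p.2 := by
    unfold mixState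
    apply Continuous.add
    · exact ((continuous_const.sub (Complex.continuous_ofReal.comp continuous_snd))).smul
        continuous_const
    · exact (Complex.continuous_ofReal.comp continuous_snd).smul continuous_const
  have hF : Continuous F := by
    apply Complex.continuous_re.comp
    exact Continuous.dotProduct continuous_const
      (Continuous.matrix_mulVec ((hmix1.matrix_mul hmix2).add (hmix2.matrix_mul hmix1))
        continuous_const)
  have hF0 : F (0, 0) < 0 := by
    have : mixState ψ₁ η₁ 0 = pureState ψ₁ := by simp [mixState]
    have h2' : mixState ψ₂ η₂ 0 = pureState ψ₂ := by simp [mixState]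
    simp only [hFdef, this, h2', hQ0]
    have : 0 < 2 * r * (1 - r)^2 := mul_pos (by linarith) (pow_pos (by linarith) 2)
    linarith
  have hopen : IsOpen {p : ℝ × ℝ | F p < 0} := isOpen_lt hF continuous_const
  obtain ⟨δ, hδ, hball⟩ := Metric.isOpen_iff.mp hopen (0, 0) hF0
  refine ⟨δ, hδ, fun ε₁ ε₂ hε₁ hε₁' hε₂ hε₂' _ hPSD => ?_⟩
  have hmem : ((ε₁, ε₂) : ℝ × ℝ) ∈ Metric.ball ((0, 0) : ℝ × ℝ) δ := by
    rw [Metric.mem_ball, Prod.dist_eq]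
    simp only [Real.dist_eq, sub_zero]
    rw [abs_of_pos hε₁, abs_of_pos hε₂]
    exact max_lt hε₁' hε₂'
  have hneg : F (ε₁, ε₂) < 0 := hball hmem
  have := hPSD.dotProduct_mulVec_nonneg v
  rw [Complex.le_def] at this
  simp only [Complex.zero_re, Complex.zero_im] at this
  exact absurd this.1 (by simpa [hFdef] using hneg.not_ge)
end

section
/- (Appendix, case |f| = 1: exact identity) Let ψ₁ be a unit vector in ℂ^d and ψ₂ = c ψ₁ with |c| = 1, let η₁, η₂ be density matrices with η₁ψ₁ = 0 and η₂ψ₂ = 0, let ε₁, ε₂ ∈ [0,1], and set ρᵢ = (1 − εᵢ)|ψᵢ⟩⟨ψᵢ| + εᵢηᵢ. Then tr[{ρ₁,ρ₂}²] − (tr[{ρ₁,ρ₂}])² = ε₁²ε₂²( tr[{η₁,η₂}²] − (tr[{η₁,η₂}])² ) − 4ε₁ε₂(1−ε₁)(1−ε₂) tr[{η₁,η₂}]. -/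
open Matrix ComplexOrder

lemma mul_pureState_eq_zero {d : ℕ} (ψ : Fin d → ℂ) (η : Matrix (Fin d) (Fin d) ℂ)
    (h : η *ᵥ ψ = 0) : η * pureState ψ = 0 := by
  ext i j
  simp only [pureState, Matrix.mul_apply, vecMulVec_apply, Matrix.zero_apply, Pi.star_apply]
  have : ∑ k, η i k * (ψ k * star (ψ j)) = (η *ᵥ ψ) i * star (ψ j) := by
    simp [Matrix.mulVec, dotProduct, Finset.sum_mul, mul_assoc]
  rw [this, h]; simp

lemma pureState_mul_eq_zero {d : ℕ} (ψ : Fin d → ℂ) (η : Matrix (Fin d) (Fin d) ℂ)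
    (hη : η.IsHermitian) (h : η *ᵥ ψ = 0) : pureState ψ * η = 0 := by
  have h1 : η * pureState ψ = 0 := mul_pureState_eq_zero ψ η h
  have h2 : (η * pureState ψ)ᴴ = 0 := by rw [h1]; simp
  rw [Matrix.conjTranspose_mul] at h2
  have hP : (pureState ψ)ᴴ = pureState ψ := by
    ext i j
    simp [pureState, vecMulVec_apply, Matrix.conjTranspose_apply, mul_comm]
  rwa [hP, hη.eq] at h2

lemma pureState_mul_self {d : ℕ} (ψ : Fin d → ℂ) (hψ : star ψ ⬝ᵥ ψ = 1) :
    pureState ψ * pureState ψ = pureState ψ := by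
  ext i j
  simp only [pureState, Matrix.mul_apply, vecMulVec_apply, Pi.star_apply]
  have : ∑ k, ψ i * star (ψ k) * (ψ k * star (ψ j))
      = (star ψ ⬝ᵥ ψ) * (ψ i * star (ψ j)) := by
    simp [dotProduct, Finset.sum_mul, Finset.mul_sum]
    congr 1; ext k; ring
  rw [this, hψ, one_mul]

lemma pureState_trace {d : ℕ} (ψ : Fin d → ℂ) (hψ : star ψ ⬝ᵥ ψ = 1) :
    (pureState ψ).trace = 1 := by
  rw [← hψ]
  simp [pureState, Matrix.trace, Matrix.diag, vecMulVec_apply, dotProduct, mul_comm]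

/-- Appendix, case `|f| = 1`, exact identity: For a unit vector `ψ₁`,
`ψ₂ = c ψ₁` with `|c| = 1`, density matrices `η₁, η₂` with `η₁ψ₁ = 0`, `η₂ψ₂ = 0`,
`ε₁, ε₂ ∈ [0,1]`, and `ρᵢ = (1 − εᵢ)|ψᵢ⟩⟨ψᵢ| + εᵢηᵢ`:
`tr[{ρ₁,ρ₂}²] − (tr[{ρ₁,ρ₂}])²
  = ε₁²ε₂²(tr[{η₁,η₂}²] − (tr[{η₁,η₂}])²) − 4ε₁ε₂(1−ε₁)(1−ε₂) tr[{η₁,η₂}]`. -/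
theorem purity_identity_parallel_case {d : ℕ} (ψ₁ ψ₂ : Fin d → ℂ)
    (hψ₁ : star ψ₁ ⬝ᵥ ψ₁ = 1) (c : ℂ) (hc : ‖c‖ = 1) (hψ₂ : ψ₂ = c • ψ₁)
    (η₁ η₂ : Matrix (Fin d) (Fin d) ℂ)
    (hη₁ : η₁.PosSemidef) (hη₁tr : η₁.trace = 1) (hη₁ψ : η₁ *ᵥ ψ₁ = 0)
    (hη₂ : η₂.PosSemidef) (hη₂tr : η₂.trace = 1) (hη₂ψ : η₂ *ᵥ ψ₂ = 0)
    (ε₁ ε₂ : ℝ) (hε₁ : ε₁ ∈ Set.Icc (0 : ℝ) 1) (hε₂ : ε₂ ∈ Set.Icc (0 : ℝ) 1) :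
    ((mixState ψ₁ η₁ ε₁ * mixState ψ₂ η₂ ε₂ + mixState ψ₂ η₂ ε₂ * mixState ψ₁ η₁ ε₁) *
        (mixState ψ₁ η₁ ε₁ * mixState ψ₂ η₂ ε₂ +
          mixState ψ₂ η₂ ε₂ * mixState ψ₁ η₁ ε₁)).trace
      - ((mixState ψ₁ η₁ ε₁ * mixState ψ₂ η₂ ε₂ +
          mixState ψ₂ η₂ ε₂ * mixState ψ₁ η₁ ε₁).trace) ^ 2
      = (ε₁ : ℂ) ^ 2 * (ε₂ : ℂ) ^ 2 *
          (((η₁ * η₂ + η₂ * η₁) * (η₁ * η₂ + η₂ * η₁)).trace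
            - ((η₁ * η₂ + η₂ * η₁).trace) ^ 2)
        - 4 * (ε₁ : ℂ) * (ε₂ : ℂ) * (1 - (ε₁ : ℂ)) * (1 - (ε₂ : ℂ)) *
            (η₁ * η₂ + η₂ * η₁).trace := by
  have hc0 : c ≠ 0 := by
    intro h; rw [h] at hc; simp at hc
  have hcc : c * (starRingEnd ℂ) c = 1 := by
    rw [Complex.mul_conj, Complex.normSq_eq_norm_sq, hc]; norm_num
  -- ψ₂ facts
  have hη₂ψ₁ : η₂ *ᵥ ψ₁ = 0 := by
    have := hη₂ψ
    rw [hψ₂, Matrix.mulVec_smul] at this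
    exact (smul_eq_zero.mp this).resolve_left hc0
  have hP2 : pureState ψ₂ = pureState ψ₁ := by
    ext i j
    simp only [pureState, vecMulVec_apply, hψ₂, Pi.smul_apply, Pi.star_apply, smul_eq_mul,
      star_mul', Complex.star_def]
    calc c * ψ₁ i * ((starRingEnd ℂ) c * (starRingEnd ℂ) (ψ₁ j))
        = (c * (starRingEnd ℂ) c) * (ψ₁ i * (starRingEnd ℂ) (ψ₁ j)) := by ring
      _ = ψ₁ i * star (ψ₁ j) := by rw [hcc, one_mul]; rfl
  set P := pureState ψ₁ with hP
  have hPP : P * P = P := pureState_mul_self ψ₁ hψ₁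
  have hPtr : P.trace = 1 := pureState_trace ψ₁ hψ₁
  have hη₁P : η₁ * P = 0 := mul_pureState_eq_zero ψ₁ η₁ hη₁ψ
  have hη₂P : η₂ * P = 0 := mul_pureState_eq_zero ψ₁ η₂ hη₂ψ₁
  have hPη₁ : P * η₁ = 0 := pureState_mul_eq_zero ψ₁ η₁ hη₁.isHermitian hη₁ψ
  have hPη₂ : P * η₂ = 0 := pureState_mul_eq_zero ψ₁ η₂ hη₂.isHermitian hη₂ψ₁
  set a : ℂ := 1 - (ε₁ : ℂ)
  set b : ℂ := 1 - (ε₂ : ℂ)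
  set e : ℂ := (ε₁ : ℂ) * (ε₂ : ℂ)
  have h12 : mixState ψ₁ η₁ ε₁ * mixState ψ₂ η₂ ε₂ = (a * b) • P + e • (η₁ * η₂) := by
    simp only [mixState, hP2, ← hP, add_mul, mul_add, smul_mul_assoc, Matrix.mul_smul,
      hPP, hPη₂, hη₁P, smul_zero, add_zero, zero_add, smul_smul]
    rfl
  have h21 : mixState ψ₂ η₂ ε₂ * mixState ψ₁ η₁ ε₁ = (a * b) • P + e • (η₂ * η₁) := by
    simp only [mixState, hP2, ← hP, add_mul, mul_add, smul_mul_assoc, Matrix.mul_smul,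
      hPP, hPη₁, hη₂P, smul_zero, add_zero, zero_add, smul_smul]
    simp only [a, b, e]
    ring_nf
  set B := η₁ * η₂ + η₂ * η₁ with hB
  have hA : mixState ψ₁ η₁ ε₁ * mixState ψ₂ η₂ ε₂ + mixState ψ₂ η₂ ε₂ * mixState ψ₁ η₁ ε₁
      = (2 * (a * b)) • P + e • B := by
    rw [h12, h21, hB, smul_add]
    module
  have hPB : P * B = 0 := by
    rw [hB, mul_add, ← mul_assoc, ← mul_assoc, hPη₁, hPη₂, zero_mul, zero_mul, add_zero]
  have hBP : B * P = 0 := by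
    rw [hB, add_mul, mul_assoc, mul_assoc, hη₂P, hη₁P, mul_zero, mul_zero, add_zero]
  rw [hA]
  have hsq : ((2 * (a * b)) • P + e • B) * ((2 * (a * b)) • P + e • B)
      = (2 * (a * b)) ^ 2 • P + (e ^ 2) • (B * B) := by
    simp only [add_mul, mul_add, smul_mul_assoc, Matrix.mul_smul, hPP, hPB, hBP,
      smul_zero, smul_smul]
    rw [pow_two, pow_two]
    module
  rw [hsq]
  simp only [Matrix.trace_add, Matrix.trace_smul, hPtr, smul_eq_mul, mul_one]
  ring
end

section
/- (Appendix, case |f| = 1: no quantumness detection) Let ψ₁ be a unit vector in ℂ^d and ψ₂ = c ψ₁ with |c| = 1, and let η₁, η₂ be density matrices with η₁ψ₁ = 0 and η₂ψ₂ = 0. Then there exists ε₀ > 0 such that for all ε₁, ε₂ with 0 < ε₁, ε₂ < ε₀, the matrices ρᵢ = (1 − εᵢ)|ψᵢ⟩⟨ψᵢ| + εᵢηᵢ satisfy tr[{ρ₁,ρ₂}²] ≤ (tr[{ρ₁,ρ₂}])²; i.e., the purity criterion fails to witness non-positivity. -/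
open Matrix ComplexOrder

section aux
variable {d : ℕ} (ψ : Fin d → ℂ) (η : Matrix (Fin d) (Fin d) ℂ)

lemma traceCT (M : Matrix (Fin d) (Fin d) ℂ) :
    (Mᴴ * M).trace = ((∑ j, ∑ i, ‖M i j‖^2 : ℝ) : ℂ) := by
  simp [Matrix.trace, Matrix.diag, Matrix.mul_apply, Complex.conj_mul']

lemma traceCT_eq_zero (M : Matrix (Fin d) (Fin d) ℂ)
    (h : (Mᴴ * M).trace = 0) : M = 0 := by
  rw [traceCT] at h
  norm_cast at h
  ext i j
  have h2 := (Finset.sum_eq_zero_iff_of_nonneg (fun j _ => Finset.sum_nonneg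
    (fun i _ => sq_nonneg ‖M i j‖))).mp h j (Finset.mem_univ j)
  have h3 := (Finset.sum_eq_zero_iff_of_nonneg (fun i _ => sq_nonneg ‖M i j‖)).mp h2 i
    (Finset.mem_univ i)
  simpa using h3

lemma pure_mul_pure (h : star ψ ⬝ᵥ ψ = 1) : pureState ψ * pureState ψ = pureState ψ := by
  ext i j
  simp only [pureState, Matrix.mul_apply, vecMulVec_apply, Pi.star_apply]
  calc ∑ k, ψ i * star (ψ k) * (ψ k * star (ψ j))
      = (∑ k, star (ψ k) * ψ k) * (ψ i * star (ψ j)) := by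
        rw [Finset.sum_mul]; exact Finset.sum_congr rfl fun k _ => by ring
    _ = ψ i * star (ψ j) := by
        have : (∑ k, star (ψ k) * ψ k) = 1 := h
        rw [this, one_mul]

lemma mul_pure (h : η *ᵥ ψ = 0) : η * pureState ψ = 0 := by
  ext i j
  simp only [pureState, Matrix.mul_apply, vecMulVec_apply, Pi.star_apply, Matrix.zero_apply]
  calc ∑ k, η i k * (ψ k * star (ψ j))
      = (∑ k, η i k * ψ k) * star (ψ j) := by
        rw [Finset.sum_mul]; exact Finset.sum_congr rfl fun k _ => by ring
    _ = 0 := by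
        have : (∑ k, η i k * ψ k) = 0 := congrFun h i
        rw [this, zero_mul]

lemma pureState_herm : (pureState ψ)ᴴ = pureState ψ := by
  ext i j
  simp [pureState, vecMulVec_apply, mul_comm]

lemma pure_mul' (hH : ηᴴ = η) (h : η *ᵥ ψ = 0) : pureState ψ * η = 0 := by
  have := congrArg conjTranspose (mul_pure ψ η h)
  rwa [conjTranspose_mul, pureState_herm, hH, conjTranspose_zero] at this

lemma trace_pure : (pureState ψ).trace = star ψ ⬝ᵥ ψ := by
  simp [pureState, Matrix.trace, Matrix.diag, vecMulVec_apply, dotProduct, mul_comm]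

lemma pureState_smul (c : ℂ) (hc : ‖c‖ = 1) : pureState (c • ψ) = pureState ψ := by
  ext i j
  simp only [pureState, vecMulVec_apply, Pi.star_apply, Pi.smul_apply, smul_eq_mul, star_mul']
  have : c * star c = 1 := by
    rw [Complex.star_def, Complex.mul_conj]
    norm_cast
    simp [← Complex.sq_norm, hc]
  calc c * ψ i * (star c * star (ψ j)) = (c * star c) * (ψ i * star (ψ j)) := by ring
    _ = ψ i * star (ψ j) := by rw [this, one_mul]

end aux

lemma purity_real_ineq (r s ε₁ ε₂ : ℝ) (hrpos : 0 < r) (hs0 : 0 ≤ s)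
    (h1 : 0 < ε₁) (h2 : 0 < ε₂) (h1h : ε₁ < 1/2) (h2h : ε₂ < 1/2)
    (h1r : ε₁ < r / (s + 1)) :
    ((1-ε₁)*(1-ε₂)*2)^2 + (ε₁*ε₂)^2 * s
      ≤ ((1-ε₁)*(1-ε₂)*2 + ε₁*ε₂*(2*r))^2 := by
  have hs1 : (0:ℝ) < s + 1 := by linarith
  have he0 : (0:ℝ) ≤ ε₁ * ε₂ := le_of_lt (mul_pos h1 h2)
  have he : ε₁ * ε₂ ≤ r / (s + 1) := by nlinarith
  have hes : ε₁ * ε₂ * (s + 1) ≤ r := by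
    calc ε₁ * ε₂ * (s + 1) ≤ (r / (s + 1)) * (s + 1) :=
          mul_le_mul_of_nonneg_right he hs1.le
      _ = r := by field_simp
  have h1s : ε₁ * ε₂ * s ≤ r := by nlinarith
  have hα : (1/4 : ℝ) ≤ (1 - ε₁) * (1 - ε₂) := by nlinarith
  have her : (0:ℝ) ≤ ε₁ * ε₂ * r := mul_nonneg he0 hrpos.le
  have key2 : (ε₁*ε₂) * ((ε₁*ε₂) * s) ≤ 8 * ((1-ε₁)*(1-ε₂)) * ((ε₁*ε₂) * r) := by
    calc (ε₁*ε₂) * ((ε₁*ε₂) * s) ≤ (ε₁*ε₂) * r := by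
          calc (ε₁*ε₂) * ((ε₁*ε₂) * s) = (ε₁*ε₂) * (ε₁ * ε₂ * s) := by ring
            _ ≤ (ε₁*ε₂) * r := mul_le_mul_of_nonneg_left h1s he0
      _ ≤ 2 * ((ε₁*ε₂) * r) := by linarith
      _ ≤ 8 * ((1-ε₁)*(1-ε₂)) * ((ε₁*ε₂) * r) := by
          have h8 : (2:ℝ) ≤ 8 * ((1-ε₁)*(1-ε₂)) := by linarith
          calc 2 * ((ε₁*ε₂) * r) ≤ (8 * ((1-ε₁)*(1-ε₂))) * ((ε₁*ε₂) * r) :=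
                mul_le_mul_of_nonneg_right h8 her
            _ = 8 * ((1-ε₁)*(1-ε₂)) * ((ε₁*ε₂) * r) := by ring
  nlinarith [key2, sq_nonneg ((ε₁*ε₂)*r)]

/-- Appendix, case `|f| = 1`, no quantumness detection: For a unit
vector `ψ₁`, `ψ₂ = c ψ₁` with `|c| = 1`, and density matrices `η₁, η₂` with
`η₁ψ₁ = 0`, `η₂ψ₂ = 0`, there is `ε₀ > 0` such that for all `0 < ε₁, ε₂ < ε₀`, the
states `ρᵢ = (1 − εᵢ)|ψᵢ⟩⟨ψᵢ| + εᵢηᵢ` satisfy `tr[{ρ₁,ρ₂}²] ≤ (tr[{ρ₁,ρ₂}])²`: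
the purity criterion fails to witness non-positivity. -/
theorem purity_criterion_fails_parallel_case {d : ℕ} (ψ₁ ψ₂ : Fin d → ℂ)
    (hψ₁ : star ψ₁ ⬝ᵥ ψ₁ = 1) (c : ℂ) (hc : ‖c‖ = 1) (hψ₂ : ψ₂ = c • ψ₁)
    (η₁ η₂ : Matrix (Fin d) (Fin d) ℂ)
    (hη₁ : η₁.PosSemidef) (hη₁tr : η₁.trace = 1) (hη₁ψ : η₁ *ᵥ ψ₁ = 0)
    (hη₂ : η₂.PosSemidef) (hη₂tr : η₂.trace = 1) (hη₂ψ : η₂ *ᵥ ψ₂ = 0) :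
    ∃ ε₀ > (0 : ℝ), ∀ ε₁ ε₂ : ℝ, 0 < ε₁ → ε₁ < ε₀ → 0 < ε₂ → ε₂ < ε₀ →
      ((mixState ψ₁ η₁ ε₁ * mixState ψ₂ η₂ ε₂ +
            mixState ψ₂ η₂ ε₂ * mixState ψ₁ η₁ ε₁) *
          (mixState ψ₁ η₁ ε₁ * mixState ψ₂ η₂ ε₂ +
            mixState ψ₂ η₂ ε₂ * mixState ψ₁ η₁ ε₁)).trace.re
        ≤ ((mixState ψ₁ η₁ ε₁ * mixState ψ₂ η₂ ε₂ +
            mixState ψ₂ η₂ ε₂ * mixState ψ₁ η₁ ε₁).trace.re) ^ 2 := by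
  set P := pureState ψ₁ with hPdef
  set S := η₁ * η₂ + η₂ * η₁ with hSdef
  have hc0 : c ≠ 0 := by
    intro h; rw [h] at hc; simp at hc
  have hη₂ψ₁ : η₂ *ᵥ ψ₁ = 0 := by
    have := hη₂ψ
    rw [hψ₂, Matrix.mulVec_smul] at this
    exact smul_eq_zero.mp this |>.resolve_left hc0
  have hps2 : pureState ψ₂ = P := by rw [hψ₂, pureState_smul ψ₁ c hc]
  have hPP : P * P = P := pure_mul_pure ψ₁ hψ₁
  have h1P : η₁ * P = 0 := mul_pure ψ₁ η₁ hη₁ψ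
  have h2P : η₂ * P = 0 := mul_pure ψ₁ η₂ hη₂ψ₁
  have hP1 : P * η₁ = 0 := pure_mul' ψ₁ η₁ hη₁.1 hη₁ψ
  have hP2 : P * η₂ = 0 := pure_mul' ψ₁ η₂ hη₂.1 hη₂ψ₁
  have hPS : P * S = 0 := by
    rw [hSdef, mul_add, ← Matrix.mul_assoc, ← Matrix.mul_assoc, hP1, hP2,
      Matrix.zero_mul, Matrix.zero_mul, add_zero]
  have hSP : S * P = 0 := by
    rw [hSdef, add_mul, Matrix.mul_assoc, Matrix.mul_assoc, h1P, h2P,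
      Matrix.mul_zero, Matrix.mul_zero, add_zero]
  have hSherm : Sᴴ = S := by
    rw [hSdef, conjTranspose_add, conjTranspose_mul, conjTranspose_mul, hη₁.1, hη₂.1, add_comm]
  -- the anticommutator
  have key : ∀ u v : ℝ, mixState ψ₁ η₁ u * mixState ψ₂ η₂ v +
      mixState ψ₂ η₂ v * mixState ψ₁ η₁ u
      = ((1-(u:ℂ))*(1-(v:ℂ))*2) • P + ((u:ℂ)*(v:ℂ)) • S := by
    intro u v
    simp only [mixState, ← hPdef, hps2, add_mul, mul_add, Matrix.smul_mul, Matrix.mul_smul,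
      hPP, h1P, h2P, hP1, hP2, smul_zero, add_zero, zero_add, smul_smul, hSdef]
    module
  -- factorizations
  obtain ⟨X, hX⟩ : ∃ X : Matrix (Fin d) (Fin d) ℂ, η₁ = Xᴴ * X := by
    open scoped MatrixOrder in exact CStarAlgebra.nonneg_iff_eq_star_mul_self.mp hη₁.nonneg
  obtain ⟨Y, hY⟩ : ∃ Y : Matrix (Fin d) (Fin d) ℂ, η₂ = Yᴴ * Y := by
    open scoped MatrixOrder in exact CStarAlgebra.nonneg_iff_eq_star_mul_self.mp hη₂.nonneg
  set M := X * Yᴴ with hMdef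
  have hτM : (η₁ * η₂).trace = (Mᴴ * M).trace := by
    rw [hX, hY, hMdef]
    simp only [conjTranspose_mul, conjTranspose_conjTranspose]
    rw [show Y * Xᴴ * (X * Yᴴ) = Y * (Xᴴ * X * Yᴴ) by noncomm_ring,
      Matrix.trace_mul_comm Y (Xᴴ * X * Yᴴ)]
    congr 1
    noncomm_ring
  obtain ⟨r, hrdef⟩ : ∃ x : ℝ, x = ∑ j, ∑ i, ‖M i j‖^2 := ⟨_, rfl⟩
  have hτ : (η₁ * η₂).trace = (r : ℂ) := by rw [hτM, traceCT, ← hrdef]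
  have hr0 : 0 ≤ r := hrdef ▸
    (Finset.sum_nonneg fun j _ => Finset.sum_nonneg fun i _ => sq_nonneg _)
  obtain ⟨s, hsdef⟩ : ∃ x : ℝ, x = ∑ j, ∑ i, ‖S i j‖^2 := ⟨_, rfl⟩
  have hσ : (S * S).trace = (s : ℂ) := by
    nth_rewrite 1 [← hSherm]
    rw [traceCT, ← hsdef]
  have hs0 : 0 ≤ s := hsdef ▸
    (Finset.sum_nonneg fun j _ => Finset.sum_nonneg fun i _ => sq_nonneg _)
  have hStr : S.trace = ((2*r : ℝ) : ℂ) := by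
    rw [hSdef, Matrix.trace_add, Matrix.trace_mul_comm η₂ η₁, hτ]
    push_cast; ring
  -- trace formulas
  have htrA : ∀ u v : ℝ, (mixState ψ₁ η₁ u * mixState ψ₂ η₂ v +
      mixState ψ₂ η₂ v * mixState ψ₁ η₁ u).trace
      = (((1-u)*(1-v)*2 + u*v*(2*r) : ℝ) : ℂ) := by
    intro u v
    rw [key, Matrix.trace_add, Matrix.trace_smul, Matrix.trace_smul,
      trace_pure, hψ₁, hStr]
    push_cast [smul_eq_mul]
    ring
  have htrA2 : ∀ u v : ℝ, ((mixState ψ₁ η₁ u * mixState ψ₂ η₂ v +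
      mixState ψ₂ η₂ v * mixState ψ₁ η₁ u) *
      (mixState ψ₁ η₁ u * mixState ψ₂ η₂ v +
      mixState ψ₂ η₂ v * mixState ψ₁ η₁ u)).trace
      = (((((1-u)*(1-v)*2))^2 + (u*v)^2 * s : ℝ) : ℂ) := by
    intro u v
    rw [key]
    have expand : (((1-(u:ℂ))*(1-(v:ℂ))*2) • P + ((u:ℂ)*(v:ℂ)) • S) *
        (((1-(u:ℂ))*(1-(v:ℂ))*2) • P + ((u:ℂ)*(v:ℂ)) • S)
        = (((1-(u:ℂ))*(1-(v:ℂ))*2)^2) • P + (((u:ℂ)*(v:ℂ))^2) • (S * S) := by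
      simp only [add_mul, mul_add, Matrix.smul_mul, Matrix.mul_smul, hPP, hPS, hSP,
        smul_zero, add_zero, zero_add, smul_smul]
      module
    rw [expand, Matrix.trace_add, Matrix.trace_smul, Matrix.trace_smul,
      trace_pure, hψ₁, hσ]
    push_cast [smul_eq_mul]
    ring
  by_cases hr : r = 0
  · -- then M = 0 and S = 0
    have hM0 : M = 0 := by
      apply traceCT_eq_zero
      rw [traceCT, ← hrdef, hr]; norm_num
    have h12z : η₁ * η₂ = 0 := by
      rw [hX, hY, show Xᴴ * X * (Yᴴ * Y) = Xᴴ * (X * Yᴴ) * Y by noncomm_ring,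
        ← hMdef, hM0, Matrix.mul_zero, Matrix.zero_mul]
    have h21z : η₂ * η₁ = 0 := by
      have := congrArg conjTranspose h12z
      rwa [conjTranspose_mul, hη₁.1, hη₂.1, conjTranspose_zero] at this
    have hS0 : S = 0 := by rw [hSdef, h12z, h21z, add_zero]
    have hs : s = 0 := by rw [hsdef, hS0]; simp
    refine ⟨1/2, by norm_num, fun ε₁ ε₂ h1 h1' h2 h2' => ?_⟩
    rw [htrA, htrA2, hr, hs]
    rw [Complex.ofReal_re, Complex.ofReal_re]
    norm_num
  · have hrpos : 0 < r := lt_of_le_of_ne hr0 (Ne.symm hr)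
    refine ⟨min (1/2) (r / (s + 1)), lt_min (by norm_num)
      (div_pos hrpos (by linarith)), fun ε₁ ε₂ h1 h1' h2 h2' => ?_⟩
    rw [htrA, htrA2, Complex.ofReal_re, Complex.ofReal_re]
    have h1h : ε₁ < 1/2 := lt_of_lt_of_le h1' (min_le_left _ _)
    have h2h : ε₂ < 1/2 := lt_of_lt_of_le h2' (min_le_left _ _)
    have h1r : ε₁ < r / (s + 1) := lt_of_lt_of_le h1' (min_le_right _ _)
    have h2r : ε₂ < r / (s + 1) := lt_of_lt_of_le h2' (min_le_right _ _)
    have hs1 : (0:ℝ) < s + 1 := by linarith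
    exact purity_real_ineq r s ε₁ ε₂ hrpos hs0 h1 h2 h1h h2h h1r
end

section
/- (Generalization of Theorem 1 to projections) Let P₁ be a rank-one orthogonal projection and P₂ an orthogonal projection on ℂ^D, and suppose P₁ and P₂ do not commute, [P₁,P₂] ≠ 0. Then tr[(P₁P₂)²] + tr[P₁P₂] − 2(tr[P₁P₂])² > 0. -/
open Matrix ComplexOrder

private lemma vmv_mul {D : ℕ} (a b : Fin D → ℂ) (M : Matrix (Fin D) (Fin D) ℂ) :
    vecMulVec a b * M = vecMulVec a (b ᵥ* M) := by
  ext i j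
  simp [mul_apply, vecMulVec_apply, vecMul, dotProduct, Finset.mul_sum, mul_assoc]

private lemma mul_vmv {D : ℕ} (a b : Fin D → ℂ) (M : Matrix (Fin D) (Fin D) ℂ) :
    M * vecMulVec a b = vecMulVec (M *ᵥ a) b := by
  ext i j
  simp [mul_apply, vecMulVec_apply, mulVec, dotProduct, Finset.sum_mul, mul_assoc]

private lemma vmv_mul_vmv {D : ℕ} (a b c d : Fin D → ℂ) :
    vecMulVec a b * vecMulVec c d = (b ⬝ᵥ c) • vecMulVec a d := by
  ext i j
  simp only [mul_apply, vecMulVec_apply, Matrix.smul_apply, dotProduct, smul_eq_mul,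
    Finset.sum_mul, Finset.mul_sum]
  apply Finset.sum_congr rfl
  intro k _
  ring

private lemma trace_vmv {D : ℕ} (a b : Fin D → ℂ) :
    (vecMulVec a b).trace = b ⬝ᵥ a := by
  simp [Matrix.trace, Matrix.diag, vecMulVec_apply, dotProduct, mul_comm]

private lemma diag_single {D : ℕ} (i₀ : Fin D) :
    (diagonal (Pi.single i₀ 1) : Matrix (Fin D) (Fin D) ℂ)
      = vecMulVec (Pi.single i₀ 1) (Pi.single i₀ 1) := by
  ext i j
  simp only [diagonal_apply, vecMulVec_apply, Pi.single_apply]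
  split_ifs <;> simp_all

/-- A Hermitian idempotent matrix with trace 1 is a rank-one projection `ψψ*`. -/
private lemma exists_unit_vec {D : ℕ} {P : Matrix (Fin D) (Fin D) ℂ}
    (h : P.IsHermitian) (hp : P * P = P) (ht : P.trace = 1) :
    ∃ ψ : Fin D → ℂ, P = vecMulVec ψ (star ψ) ∧ star ψ ⬝ᵥ ψ = 1 := by
  classical
  set U : Matrix (Fin D) (Fin D) ℂ := (h.eigenvectorUnitary : Matrix (Fin D) (Fin D) ℂ) with hU
  have hUU : star U * U = 1 := (Matrix.mem_unitaryGroup_iff').mp h.eigenvectorUnitary.2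
  have hUU' : U * star U = 1 := (Matrix.mem_unitaryGroup_iff).mp h.eigenvectorUnitary.2
  have hspec : P = U * diagonal (RCLike.ofReal ∘ h.eigenvalues) * star U := h.spectral_theorem
  have hdiag : star U * P * U = diagonal (RCLike.ofReal ∘ h.eigenvalues) :=
    by rw [← h.conjStarAlgAut_star_eigenvectorUnitary, Unitary.conjStarAlgAut_star_apply]
  have hidem : (diagonal (RCLike.ofReal ∘ h.eigenvalues) : Matrix (Fin D) (Fin D) ℂ)
      * diagonal (RCLike.ofReal ∘ h.eigenvalues) = diagonal (RCLike.ofReal ∘ h.eigenvalues) := by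
    rw [← hdiag]
    calc (star U * P * U) * (star U * P * U)
        = star U * (P * (U * star U) * P) * U := by noncomm_ring
      _ = star U * P * U := by rw [hUU']; simp [hp, Matrix.mul_assoc]
  have heig : ∀ i, h.eigenvalues i = 0 ∨ h.eigenvalues i = 1 := by
    intro i
    have h2 := congrArg (fun M => M i i) hidem
    simp [diagonal_mul_diagonal] at h2
    have h3 : h.eigenvalues i * h.eigenvalues i = h.eigenvalues i := by
      exact_mod_cast (h2 : (h.eigenvalues i : ℂ) * h.eigenvalues i = h.eigenvalues i)
    have h4 : h.eigenvalues i * (h.eigenvalues i - 1) = 0 := by ring_nf; linarith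
    rcases mul_eq_zero.mp h4 with h5 | h5
    · exact Or.inl h5
    · exact Or.inr (by linarith)
  -- trace is the sum of eigenvalues
  have htr : ∑ i, (h.eigenvalues i : ℂ) = 1 := by
    have htreq : P.trace
        = (diagonal (RCLike.ofReal ∘ h.eigenvalues) : Matrix (Fin D) (Fin D) ℂ).trace := by
      conv_lhs => rw [hspec]
      rw [Matrix.trace_mul_cycle, hUU, Matrix.one_mul]
    rw [ht] at htreq
    simpa [Matrix.trace_diagonal] using htreq.symm
  have htrR : ∑ i, h.eigenvalues i = 1 := by exact_mod_cast htr
  -- exactly one eigenvalue equals 1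
  have hcard : ∃ i₀, h.eigenvalues i₀ = 1 ∧ ∀ j, j ≠ i₀ → h.eigenvalues j = 0 := by
    have hsum : ∑ i, h.eigenvalues i
        = (Finset.univ.filter (fun i => h.eigenvalues i = 1)).card := by
      rw [Finset.card_filter]
      push_cast
      apply Finset.sum_congr rfl
      intro i _
      rcases heig i with h0 | h0 <;> simp [h0]
    rw [htrR] at hsum
    have hone : (Finset.univ.filter (fun i => h.eigenvalues i = 1)).card = 1 := by
      exact_mod_cast hsum.symm
    obtain ⟨i₀, hi₀⟩ := Finset.card_eq_one.mp hone
    have hmem : ∀ j, h.eigenvalues j = 1 ↔ j = i₀ := by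
      intro j
      constructor
      · intro hj
        have hjm : j ∈ Finset.univ.filter (fun i => h.eigenvalues i = 1) := by simp [hj]
        rw [hi₀] at hjm; simpa using hjm
      · intro hj
        rw [hj]
        have him : i₀ ∈ Finset.univ.filter (fun i => h.eigenvalues i = 1) := by
          rw [hi₀]; simp
        simpa using him
    refine ⟨i₀, (hmem i₀).mpr rfl, fun j hj => ?_⟩
    rcases heig j with h0 | h1
    · exact h0
    · exact absurd ((hmem j).mp h1) hj
  obtain ⟨i₀, hi₀, hrest⟩ := hcard
  -- the diagonal is `Pi.single i₀ 1`
  have hdiag1 : (RCLike.ofReal ∘ h.eigenvalues : Fin D → ℂ) = Pi.single i₀ 1 := by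
    funext j
    by_cases hj : j = i₀
    · subst hj; simp [hi₀]
    · simp [Pi.single_apply, hj, hrest j hj]
  have hdvmv := diag_single i₀
  have hcol : U *ᵥ Pi.single i₀ (1 : ℂ) = fun j => U j i₀ := by
    funext j; simp
  have hrow : Pi.single i₀ (1 : ℂ) ᵥ* star U = star (fun j => U j i₀) := by
    funext j
    simp [Matrix.single_vecMul, Matrix.conjTranspose_apply, Pi.star_apply]
  refine ⟨fun j => U j i₀, ?_, ?_⟩
  · rw [hspec, hdiag1, hdvmv, mul_vmv, vmv_mul, hcol, hrow]
  · have h11 := congrArg (fun M => M i₀ i₀) hUU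
    simpa [mul_apply, dotProduct, conjTranspose_apply, Pi.star_apply] using h11

private lemma proj_dot {D : ℕ} {Q : Matrix (Fin D) (Fin D) ℂ}
    (hherm : Q.IsHermitian) (hproj : Q * Q = Q) (ψ : Fin D → ℂ) :
    star ψ ⬝ᵥ (Q *ᵥ ψ) = star (Q *ᵥ ψ) ⬝ᵥ (Q *ᵥ ψ) := by
  conv_lhs => rw [← hproj]
  rw [← Matrix.mulVec_mulVec, Matrix.dotProduct_mulVec]
  congr 1
  rw [Matrix.star_mulVec, hherm.eq]

/-- Generalization of Theorem 1 to projections: Let `P₁` be a rank-one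
orthogonal projection (`tr P₁ = 1`) and `P₂` an orthogonal projection on `ℂ^D` that do
not commute.  Then `tr[(P₁P₂)²] + tr[P₁P₂] − 2(tr[P₁P₂])² > 0`. -/
theorem rank_one_projection_purity_pos {D : ℕ} (P₁ P₂ : Matrix (Fin D) (Fin D) ℂ)
    (hP₁herm : P₁.IsHermitian) (hP₁proj : P₁ * P₁ = P₁) (hP₁tr : P₁.trace = 1)
    (hP₂herm : P₂.IsHermitian) (hP₂proj : P₂ * P₂ = P₂)
    (hcomm : P₁ * P₂ ≠ P₂ * P₁) :
    0 < (((P₁ * P₂) * (P₁ * P₂)).trace + (P₁ * P₂).trace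
          - 2 * ((P₁ * P₂).trace) ^ 2).re := by
  obtain ⟨ψ, hP, hψ⟩ := exists_unit_vec hP₁herm hP₁proj hP₁tr
  set t : ℂ := star ψ ⬝ᵥ (P₂ *ᵥ ψ) with htdef
  have hv : (star ψ ᵥ* P₂) ⬝ᵥ ψ = t := by
    rw [htdef, Matrix.dotProduct_mulVec]
  have htr1 : (P₁ * P₂).trace = t := by
    rw [hP, vmv_mul, trace_vmv, htdef, Matrix.dotProduct_mulVec]
  have htr2 : ((P₁ * P₂) * (P₁ * P₂)).trace = t * t := by
    rw [hP, vmv_mul, vmv_mul_vmv, Matrix.trace_smul, trace_vmv, smul_eq_mul, hv]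
  have hstv : star ψ ᵥ* P₂ = star (P₂ *ᵥ ψ) := by
    rw [Matrix.star_mulVec, hP₂herm.eq]
  -- positivity of t and 1 - t
  have ht_eq : t = star (P₂ *ᵥ ψ) ⬝ᵥ (P₂ *ᵥ ψ) := proj_dot hP₂herm hP₂proj ψ
  have hQherm : (1 - P₂).IsHermitian := by
    unfold Matrix.IsHermitian
    rw [conjTranspose_sub, hP₂herm.eq, conjTranspose_one]
  have hQproj : (1 - P₂) * (1 - P₂) = 1 - P₂ := by
    rw [sub_mul, mul_sub, mul_sub, hP₂proj]
    simp
  have hts_eq : 1 - t = star ((1 - P₂) *ᵥ ψ) ⬝ᵥ ((1 - P₂) *ᵥ ψ) := by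
    rw [← proj_dot hQherm hQproj ψ]
    rw [Matrix.sub_mulVec, Matrix.one_mulVec, dotProduct_sub, hψ, htdef]
  have hPψ_ne : P₂ *ᵥ ψ ≠ 0 := by
    intro h0
    apply hcomm
    have h1 : P₂ * P₁ = 0 := by
      rw [hP, mul_vmv, h0]
      ext i j; simp [vecMulVec_apply]
    have h2 : P₁ * P₂ = 0 := by
      rw [hP, vmv_mul, hstv, h0]
      ext i j; simp [vecMulVec_apply]
    rw [h1, h2]
  have hQψ_ne : (1 - P₂) *ᵥ ψ ≠ 0 := by
    intro h0
    have hfix : P₂ *ᵥ ψ = ψ := by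
      rw [Matrix.sub_mulVec, Matrix.one_mulVec, sub_eq_zero] at h0
      exact h0.symm
    apply hcomm
    have h1 : P₂ * P₁ = P₁ := by rw [hP, mul_vmv, hfix]
    have h2 : P₁ * P₂ = P₁ := by rw [hP, vmv_mul, hstv, hfix]
    rw [h1, h2]
  have ht_pos : 0 < t := by
    rw [ht_eq]
    exact Matrix.dotProduct_star_self_pos_iff.mpr hPψ_ne
  have hts_pos : 0 < 1 - t := by
    rw [hts_eq]
    exact Matrix.dotProduct_star_self_pos_iff.mpr hQψ_ne
  rw [htr1, htr2]
  rw [Complex.lt_def] at ht_pos hts_pos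
  obtain ⟨htre, htim⟩ := ht_pos
  obtain ⟨htsre, _⟩ := hts_pos
  simp only [Complex.zero_re, Complex.zero_im, Complex.sub_re, Complex.one_re] at htre htim htsre
  have h1 : t.re < 1 := by linarith
  have him : t.im = 0 := htim.symm
  have hrw : t * t + t - 2 * t ^ 2 = t - t * t := by ring
  rw [hrw]
  rw [Complex.sub_re, Complex.mul_re, him]
  nlinarith
end

section
/- (Three-level example: quantumness is present) Let P₁ = diag(1,1,0) and P₂ = R · diag(0,1,1) · Rᵀ as 3×3 matrices, where R is the rotation matrix with rows (cosθ, 0, −sinθ), (0, 1, 0), (sinθ, 0, cosθ), and set ρ₁ = P₁/2, ρ₂ = P₂/2. If sinθ · cosθ ≠ 0, then the anticommutator {ρ₁,ρ₂} = ρ₁ρ₂ + ρ₂ρ₁ has a negative eigenvalue; in particular it is not positive semidefinite. -/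
open Matrix ComplexOrder

/-- The projection `P₁ = diag(1,1,0)`. -/
noncomputable def projOne : Matrix (Fin 3) (Fin 3) ℂ := !![1, 0, 0; 0, 1, 0; 0, 0, 0]

/-- The diagonal matrix `diag(0,1,1)`. -/
noncomputable def diagZeroOneOne : Matrix (Fin 3) (Fin 3) ℂ :=
  !![0, 0, 0; 0, 1, 0; 0, 0, 1]

/-- The rotation matrix with rows `(cos θ, 0, −sin θ)`, `(0, 1, 0)`, `(sin θ, 0, cos θ)`. -/
noncomputable def rotMat (θ : ℝ) : Matrix (Fin 3) (Fin 3) ℂ :=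
  !![(Real.cos θ : ℂ), 0, -(Real.sin θ : ℂ);
     0, 1, 0;
     (Real.sin θ : ℂ), 0, (Real.cos θ : ℂ)]

lemma quad_val (s c : ℝ) :
    star ![((s : ℂ) * c), 0, ((s : ℂ)^2 + 1)] ⬝ᵥ
      ((2 : ℂ)⁻¹ • projOne *
          ((2 : ℂ)⁻¹ • (!![(c : ℂ), 0, -(s : ℂ); 0, 1, 0; (s : ℂ), 0, (c : ℂ)] * diagZeroOneOne *
            !![(c : ℂ), 0, (s : ℂ); 0, 1, 0; -(s : ℂ), 0, (c : ℂ)])) +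
        (2 : ℂ)⁻¹ • (!![(c : ℂ), 0, -(s : ℂ); 0, 1, 0; (s : ℂ), 0, (c : ℂ)] * diagZeroOneOne *
            !![(c : ℂ), 0, (s : ℂ); 0, 1, 0; -(s : ℂ), 0, (c : ℂ)]) *
          ((2 : ℂ)⁻¹ • projOne)) *ᵥ
      ![((s : ℂ) * c), 0, ((s : ℂ)^2 + 1)]
      = ((-(s * c)^2 / 2 : ℝ) : ℂ) := by
  simp [projOne, diagZeroOneOne, Matrix.mul_apply, mulVec, dotProduct,
    Fin.sum_univ_three, Complex.conj_ofReal, Matrix.vecHead, Matrix.vecTail]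
  ring

/-- Three-level example, quantumness is present: With
`P₁ = diag(1,1,0)`, `P₂ = R · diag(0,1,1) · Rᵀ`, `ρ₁ = P₁/2`, `ρ₂ = P₂/2`, and
`sin θ · cos θ ≠ 0`, the anticommutator `{ρ₁,ρ₂} = ρ₁ρ₂ + ρ₂ρ₁` has a negative
eigenvalue (i.e. `⟨v, {ρ₁,ρ₂} v⟩ < 0` for some `v`); in particular it is not
positive semidefinite. -/
theorem three_level_example_negative_eigenvalue (θ : ℝ)
    (hθ : Real.sin θ * Real.cos θ ≠ 0)
    (P₂ ρ₁ ρ₂ : Matrix (Fin 3) (Fin 3) ℂ)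
    (hP₂ : P₂ = rotMat θ * diagZeroOneOne * (rotMat θ)ᵀ)
    (hρ₁ : ρ₁ = (2 : ℂ)⁻¹ • projOne) (hρ₂ : ρ₂ = (2 : ℂ)⁻¹ • P₂) :
    (∃ v : Fin 3 → ℂ, (star v ⬝ᵥ (ρ₁ * ρ₂ + ρ₂ * ρ₁) *ᵥ v).re < 0) ∧
      ¬ (ρ₁ * ρ₂ + ρ₂ * ρ₁).PosSemidef := by
  have ht : (rotMat θ)ᵀ = !![(Real.cos θ : ℂ), 0, (Real.sin θ : ℂ);
      0, 1, 0; -(Real.sin θ : ℂ), 0, (Real.cos θ : ℂ)] := by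
    unfold rotMat
    ext i j
    fin_cases i <;> fin_cases j <;> simp [Matrix.transpose_apply]
  rw [ht] at hP₂
  subst hP₂ hρ₁ hρ₂
  set s := Real.sin θ with hs
  set c := Real.cos θ with hc
  set v : Fin 3 → ℂ := ![((s : ℂ) * c), 0, ((s : ℂ)^2 + 1)] with hv
  have hrot : rotMat θ = !![(c : ℂ), 0, -(s : ℂ); 0, 1, 0; (s : ℂ), 0, (c : ℂ)] := rfl
  have hval := quad_val s c
  rw [← hrot] at hval
  have key : (star v ⬝ᵥ ((2 : ℂ)⁻¹ • projOne * ((2 : ℂ)⁻¹ •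
      (rotMat θ * diagZeroOneOne * !![(c : ℂ), 0, (s : ℂ); 0, 1, 0; -(s : ℂ), 0, (c : ℂ)])) +
      (2 : ℂ)⁻¹ • (rotMat θ * diagZeroOneOne *
        !![(c : ℂ), 0, (s : ℂ); 0, 1, 0; -(s : ℂ), 0, (c : ℂ)]) * ((2 : ℂ)⁻¹ • projOne)) *ᵥ v).re
      < 0 := by
    rw [hv, hval, Complex.ofReal_re]
    have h2 : 0 < (s * c) ^ 2 := by positivity
    linarith
  exact ⟨⟨v, key⟩, fun h => by
    have h0 := (Complex.le_def.mp (h.dotProduct_mulVec_nonneg v)).1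
    simp only [Complex.zero_re] at h0
    linarith⟩
end
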